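/- Suppose Ω is compact and the market (f, S) is arbitrage-free, and let H : Ω → ℝ be a continuous nonnegative claim. Then there exists a martingale measure P* that maximizes ∫ H dμ over all martingale measures μ for (f, S). -/

import Mathlib

open MeasureTheory Filter Topology

variable {Ω : Type*}

section Defs

variable [TopologicalSpace Ω] [MeasurableSpace Ω]

/-- A portfolio `π` is an arbitrage for the market `(f, S)`:
nonpositive cost, nonnegative payoff everywhere, strictly positive payoff somewhere. -/
def IsArbitrage {D : ℕ} (f : Fin (D + 1) → ℝ) (S : Fin (D + 1) → C(Ω, ℝ))
    (π : Fin (D + 1) → ℝ) : Prop :=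
  (∑ d, π d * f d) ≤ 0 ∧ (∀ ω : Ω, 0 ≤ ∑ d, π d * S d ω) ∧ (∃ ω : Ω, 0 < ∑ d, π d * S d ω)

/-- The market `(f, S)` is arbitrage-free. -/
def ArbitrageFree {D : ℕ} (f : Fin (D + 1) → ℝ) (S : Fin (D + 1) → C(Ω, ℝ)) : Prop :=
  ¬ ∃ π : Fin (D + 1) → ℝ, IsArbitrage f S π

/-- A measure has full support: every nonempty open set has positive measure. -/
def HasFullSupport (P : Measure Ω) : Prop :=
  ∀ U : Set Ω, IsOpen U → U.Nonempty → 0 < P U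

/-- A martingale measure for the market `(f, S)`: a Borel probability measure under which
every asset payoff is integrable with expectation equal to its time-0 price. -/
def IsMartingaleMeasure {D : ℕ} (f : Fin (D + 1) → ℝ) (S : Fin (D + 1) → C(Ω, ℝ))
    (P : Measure Ω) : Prop :=
  IsProbabilityMeasure P ∧ ∀ d, Integrable (S d) P ∧ (∫ ω, S d ω ∂P) = f d

/-- A portfolio `π` is a superhedge for the claim `H`. -/
def IsSuperhedge {D : ℕ} (S : Fin (D + 1) → C(Ω, ℝ)) (H : C(Ω, ℝ))
    (π : Fin (D + 1) → ℝ) : Prop :=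
  ∀ ω : Ω, H ω ≤ ∑ d, π d * S d ω

/-- A portfolio `π` is a subhedge for the claim `H`. -/
def IsSubhedge {D : ℕ} (S : Fin (D + 1) → C(Ω, ℝ)) (H : C(Ω, ℝ))
    (π : Fin (D + 1) → ℝ) : Prop :=
  ∀ ω : Ω, (∑ d, π d * S d ω) ≤ H ω

end Defs

section Aux

lemma sum_dite_fin' {M : Type*} [AddCommMonoid M] {c N : ℕ} (hc : c ≤ N) (F : Fin c → M) :
    (∑ j : Fin N, if h : (j : ℕ) < c then F ⟨j, h⟩ else 0) = ∑ i : Fin c, F i := by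
  classical
  have h2 : ∑ j ∈ Finset.univ.map (Fin.castLEEmb hc),
      (if h : (j : ℕ) < c then F ⟨j, h⟩ else 0) = ∑ i : Fin c, F i := by
    rw [Finset.sum_map]
    refine Finset.sum_congr rfl fun i _ => ?_
    have hi : ((Fin.castLEEmb hc i : Fin N) : ℕ) < c := i.isLt
    rw [dif_pos hi]
    have he : (⟨((Fin.castLEEmb hc i : Fin N) : ℕ), hi⟩ : Fin c) = i := Fin.ext rfl
    rw [he]
  rw [← h2]
  refine (Finset.sum_subset (Finset.subset_univ _) ?_).symm
  intro j _ hj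
  rw [dif_neg]
  intro hlt
  exact hj (Finset.mem_map.mpr ⟨⟨j, hlt⟩, Finset.mem_univ _, rfl⟩)

lemma isCompact_convexHull_of_isCompact {E : Type*} [NormedAddCommGroup E] [NormedSpace ℝ E]
    [FiniteDimensional ℝ E] {s : Set E} (hs : IsCompact s) : IsCompact (convexHull ℝ s) := by
  classical
  rcases s.eq_empty_or_nonempty with rfl | ⟨x₀, hx₀⟩
  · simp
  set N := Module.finrank ℝ E + 1 with hN
  have hmap : convexHull ℝ s =
      (fun p : (Fin N → ℝ) × (Fin N → E) => ∑ i, p.1 i • p.2 i) ''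
        ((stdSimplex ℝ (Fin N)) ×ˢ (Set.univ.pi fun _ => s)) := by
    apply Set.Subset.antisymm
    · intro x hx
      obtain ⟨ι, hfin, z, w, hzs, hai, hwpos, hwsum, hxe⟩ :=
        eq_pos_convex_span_of_mem_convexHull hx
      have hcard : Fintype.card ι ≤ N :=
        hai.card_le_finrank_succ.trans (Nat.succ_le_succ (Submodule.finrank_le _))
      set c := Fintype.card ι with hc
      let e := Fintype.equivFin ι
      refine ⟨(fun j => if h : (j : ℕ) < c then w (e.symm ⟨j, h⟩) else 0,
               fun j => if h : (j : ℕ) < c then z (e.symm ⟨j, h⟩) else x₀), ⟨?_, ?_⟩, ?_⟩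
      · constructor
        · intro j
          dsimp only
          split_ifs with h
          · exact (hwpos _).le
          · exact le_rfl
        · rw [sum_dite_fin' hcard (fun i => w (e.symm i))]
          rw [Equiv.sum_comp e.symm w]
          exact hwsum
      · intro j _
        dsimp only
        split_ifs with h
        · exact hzs (Set.mem_range_self _)
        · exact hx₀
      · dsimp only
        have : ∀ j : Fin N,
            (if h : (j : ℕ) < c then w (e.symm ⟨j, h⟩) else 0) •
              (if h : (j : ℕ) < c then z (e.symm ⟨j, h⟩) else x₀) =
            (if h : (j : ℕ) < c then w (e.symm ⟨j, h⟩) • z (e.symm ⟨j, h⟩) else 0) := by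
          intro j; split_ifs with h <;> simp
        rw [Finset.sum_congr rfl fun j _ => this j,
          sum_dite_fin' hcard (fun i => w (e.symm i) • z (e.symm i)),
          Equiv.sum_comp e.symm (fun i => w i • z i)]
        exact hxe
    · rintro x ⟨⟨wv, zv⟩, ⟨hw, hz⟩, rfl⟩
      obtain ⟨hw0, hw1⟩ := hw
      exact (convex_convexHull ℝ s).sum_mem (fun i _ => hw0 i) hw1
        (fun i _ => subset_convexHull ℝ s (hz i (Set.mem_univ i)))
  rw [hmap]
  exact (((isCompact_stdSimplex ℝ _).prod (isCompact_univ_pi fun _ => hs)).image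
    (continuous_finset_sum _ fun i _ =>
      ((continuous_apply i).comp continuous_fst).smul ((continuous_apply i).comp continuous_snd)))

lemma integrable_finset_smul_dirac {Ω : Type*} [MeasurableSpace Ω] [MeasurableSingletonClass Ω]
    {ι : Type*} {i : ι} (w : ι → ℝ) (z : ι → Ω) {h : Ω → ℝ} (hh : Measurable h) :
    Integrable h (ENNReal.ofReal (w i) • Measure.dirac (z i)) := by
  refine Integrable.smul_measure ?_ ENNReal.ofReal_ne_top
  refine ⟨hh.aestronglyMeasurable, ?_⟩
  rw [HasFiniteIntegral, lintegral_dirac' _ (by measurability)]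
  exact ENNReal.coe_lt_top

lemma integral_finset_smul_dirac {Ω : Type*} [MeasurableSpace Ω] [MeasurableSingletonClass Ω]
    {ι : Type*} (t : Finset ι) (w : ι → ℝ) (hw : ∀ i ∈ t, 0 ≤ w i) (z : ι → Ω)
    {h : Ω → ℝ} (hh : Measurable h) :
    ∫ ω, h ω ∂(∑ i ∈ t, ENNReal.ofReal (w i) • Measure.dirac (z i)) =
      ∑ i ∈ t, w i * h (z i) := by
  rw [integral_finset_sum_measure (fun i _ => integrable_finset_smul_dirac w z hh)]
  refine Finset.sum_congr rfl fun i hi => ?_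
  rw [integral_smul_measure, integral_dirac, ENNReal.toReal_ofReal (hw i hi), smul_eq_mul]

lemma isProbabilityMeasure_finset_smul_dirac {Ω : Type*} [MeasurableSpace Ω]
    {ι : Type*} (t : Finset ι) (w : ι → ℝ) (hw : ∀ i ∈ t, 0 ≤ w i) (hw1 : ∑ i ∈ t, w i = 1)
    (z : ι → Ω) :
    IsProbabilityMeasure (∑ i ∈ t, ENNReal.ofReal (w i) • Measure.dirac (z i)) := by
  constructor
  rw [Measure.finset_sum_apply]
  simp only [Measure.smul_apply, measure_univ, smul_eq_mul, mul_one]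
  rw [← ENNReal.ofReal_sum_of_nonneg hw, hw1, ENNReal.ofReal_one]

end Aux

/-- existence of a martingale measure maximizing the expected claim. -/
theorem exists_maximizing_martingaleMeasure
    [MetricSpace Ω] [Nonempty Ω] [CompactSpace Ω] [TopologicalSpace.SeparableSpace Ω]
    [CompleteSpace Ω] [MeasurableSpace Ω] [BorelSpace Ω] {D : ℕ} (f : Fin (D + 1) → ℝ) (S : Fin (D + 1) → C(Ω, ℝ))
    (hf : ∀ d, 0 ≤ f d) (hS : ∀ d ω, 0 ≤ S d ω)
    (hS0 : ∀ ω, S 0 ω = 1) (hf0 : f 0 = 1)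
    (hNA : ArbitrageFree f S) (H : C(Ω, ℝ)) (hH : ∀ ω, 0 ≤ H ω) :
    ∃ Pstar : Measure Ω, IsMartingaleMeasure f S Pstar ∧
      ∀ μ : Measure Ω, IsMartingaleMeasure f S μ →
        (∫ ω, H ω ∂μ) ≤ ∫ ω, H ω ∂Pstar := by
    classical
  set g1 : Ω → (Fin (D + 1) → ℝ) := fun ω d => S d ω with hg1def
  have hg1c : Continuous g1 := continuous_pi fun d => (S d).continuous
  set g : Ω → (Fin (D + 1) → ℝ) × ℝ := fun ω => (g1 ω, H ω) with hgdef
  have hgc : Continuous g := hg1c.prodMk H.continuous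
  set K : Set (Fin (D + 1) → ℝ) := convexHull ℝ (Set.range g1) with hKdef
  set C : Set ((Fin (D + 1) → ℝ) × ℝ) := convexHull ℝ (Set.range g) with hCdef
  have hKcomp : IsCompact K := isCompact_convexHull_of_isCompact (isCompact_range hg1c)
  have hCcomp : IsCompact C := isCompact_convexHull_of_isCompact (isCompact_range hgc)
  -- Step A: f ∈ K, else arbitrage
  have hfK : f ∈ K := by
    by_contra hf'
    obtain ⟨φ, u, hu1, hu2⟩ :=
      geometric_hahn_banach_point_closed (convex_convexHull ℝ _) hKcomp.isClosed hf'
    set π : Fin (D + 1) → ℝ := fun d => φ (Pi.single d 1) with hπ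
    have hφ : ∀ x : Fin (D + 1) → ℝ, φ x = ∑ d, π d * x d := by
      intro x
      have hx : x = ∑ d, x d • (Pi.single d (1 : ℝ) : Fin (D + 1) → ℝ) := by
        symm
        calc (∑ d, x d • (Pi.single d (1 : ℝ) : Fin (D + 1) → ℝ))
            = ∑ d, (Pi.single d (x d) : Fin (D + 1) → ℝ) :=
              Finset.sum_congr rfl fun d _ => by
                rw [← Pi.single_smul' d (x d) (1 : ℝ), smul_eq_mul, mul_one]
          _ = x := Finset.univ_sum_single x
      calc φ x = φ (∑ d, x d • (Pi.single d (1 : ℝ) : Fin (D + 1) → ℝ)) := by rw [← hx]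
        _ = ∑ d, x d • φ (Pi.single d (1 : ℝ)) := by rw [map_sum]; simp
        _ = ∑ d, π d * x d := Finset.sum_congr rfl fun d _ => by
              rw [smul_eq_mul, mul_comm]
    set π' : Fin (D + 1) → ℝ := fun d => π d - φ f * (if d = 0 then 1 else 0) with hπ'
    have hcost : (∑ d, π' d * f d) = 0 := by
      simp only [hπ', sub_mul, Finset.sum_sub_distrib]
      have h1 : (∑ d, π d * f d) = φ f := (hφ f).symm
      have h2 : (∑ d, φ f * (if d = 0 then 1 else 0) * f d) = φ f := by
        rw [Finset.sum_congr rfl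
          (fun d _ => show φ f * (if d = 0 then 1 else 0) * f d
            = if d = 0 then φ f * f d else 0 by split_ifs <;> ring)]
        rw [Finset.sum_ite_eq' Finset.univ (0 : Fin (D + 1)) (fun d => φ f * f d)]
        simp [hf0]
      rw [h1, h2, sub_self]
    have hpay : ∀ ω : Ω, 0 < ∑ d, π' d * S d ω := by
      intro ω
      have hmem : g1 ω ∈ K := subset_convexHull ℝ _ (Set.mem_range_self ω)
      have h2 : (∑ d, φ f * (if d = 0 then 1 else 0) * S d ω) = φ f := by
        rw [Finset.sum_congr rfl
          (fun d _ => show φ f * (if d = 0 then 1 else 0) * S d ω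
            = if d = 0 then φ f * S d ω else 0 by split_ifs <;> ring)]
        rw [Finset.sum_ite_eq' Finset.univ (0 : Fin (D + 1)) (fun d => φ f * S d ω)]
        simp [hS0 ω]
      have h1 : (∑ d, π d * S d ω) = φ (g1 ω) := (hφ (g1 ω)).symm
      have : (∑ d, π' d * S d ω) = φ (g1 ω) - φ f := by
        simp only [hπ', sub_mul, Finset.sum_sub_distrib, h1, h2]
      rw [this]
      have := hu2 _ hmem
      linarith
    exact hNA ⟨π', hcost.le, fun ω => (hpay ω).le,
      ⟨Classical.arbitrary Ω, hpay (Classical.arbitrary Ω)⟩⟩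
  -- the slice A of attainable expectations
  set A : Set ℝ := {t | (f, t) ∈ C} with hAdef
  have hAcl : IsClosed A := hCcomp.isClosed.preimage (Continuous.prodMk_right f)
  have hAcomp : IsCompact A := by
    refine (hCcomp.image continuous_snd).of_isClosed_subset hAcl ?_
    intro t ht
    exact ⟨(f, t), ht, rfl⟩
  have hAne : A.Nonempty := by
    have himg : (Prod.fst '' C : Set (Fin (D + 1) → ℝ)) = K := by
      have : (Prod.fst '' C : Set (Fin (D + 1) → ℝ)) =
          (LinearMap.fst ℝ (Fin (D + 1) → ℝ) ℝ) '' C := rfl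
      rw [this, hCdef, LinearMap.image_convexHull, hKdef]
      congr 1
      rw [← Set.range_comp]
      rfl
    obtain ⟨p, hpC, hpf⟩ := himg ▸ hfK
    exact ⟨p.2, by simpa [hAdef, ← hpf] using hpC⟩
  set m : ℝ := sSup A with hm
  have hmA : m ∈ A := hAcomp.sSup_mem hAne
  -- extract a finite convex combination representing (f, m)
  have hmC : (f, m) ∈ convexHull ℝ (Set.range g) := hmA
  rw [convexHull_eq] at hmC
  obtain ⟨ι, t, w, z, hw0, hw1, hzs, hcm⟩ := hmC
  rw [Finset.centerMass_eq_of_sum_1 _ _ hw1] at hcm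
  have hzω : ∀ i ∈ t, ∃ ωi : Ω, g ωi = z i := fun i hi => hzs i hi
  choose! ω hω using hzω
  set P : Measure Ω := ∑ i ∈ t, ENNReal.ofReal (w i) • Measure.dirac (ω i) with hP
  have hPprob : IsProbabilityMeasure P := isProbabilityMeasure_finset_smul_dirac t w hw0 hw1 ω
  have hPint : ∀ h : Ω → ℝ, Measurable h →
      ∫ x, h x ∂P = ∑ i ∈ t, w i * h (ω i) := fun h hh =>
    integral_finset_smul_dirac t w hw0 ω hh
  -- the first components of the combination
  have hfst : ∀ d, (∑ i ∈ t, w i * S d (ω i)) = f d := by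
    intro d
    have h2 : (∑ i ∈ t, (w i • z i).1 d) = f d := by
      have h1 := congrFun (congrArg Prod.fst hcm) d
      simpa [Prod.fst_sum, Finset.sum_apply] using h1
    rw [← h2]
    refine Finset.sum_congr rfl fun i hi => ?_
    have hzi : (z i).1 d = S d (ω i) := by rw [← hω i hi]
    simp [Prod.smul_fst, hzi, smul_eq_mul]
  have hsnd : (∑ i ∈ t, w i * H (ω i)) = m := by
    have h2 : (∑ i ∈ t, (w i • z i).2) = m := by
      have h1 := congrArg Prod.snd hcm
      simpa [Prod.snd_sum] using h1
    rw [← h2]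
    refine Finset.sum_congr rfl fun i hi => ?_
    have hzi : (z i).2 = H (ω i) := by rw [← hω i hi]
    simp [Prod.smul_snd, hzi, smul_eq_mul]
  have hPH : ∫ x, H x ∂P = m := by
    rw [hPint H H.continuous.measurable, hsnd]
  -- P is a martingale measure
  have hPmm : IsMartingaleMeasure f S P := by
    refine ⟨hPprob, fun d => ⟨?_, ?_⟩⟩
    · exact (S d).continuous.integrable_of_hasCompactSupport
        ((isClosed_tsupport _).isCompact)
    · rw [hPint (S d) (S d).continuous.measurable, hfst d]
  refine ⟨P, hPmm, fun μ hμ => ?_⟩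
  haveI : IsProbabilityMeasure μ := hμ.1
  -- integrability of g
  have hgint : Integrable g μ :=
    hgc.integrable_of_hasCompactSupport ((isClosed_tsupport _).isCompact)
  have hmem : (∫ x, g x ∂μ) ∈ C :=
    (convex_convexHull ℝ _).integral_mem hCcomp.isClosed
      (Filter.Eventually.of_forall fun x => subset_convexHull ℝ _ (Set.mem_range_self x)) hgint
  have hint1 : Integrable g1 μ :=
    hg1c.integrable_of_hasCompactSupport ((isClosed_tsupport _).isCompact)
  have hintH : Integrable (fun x => H x) μ :=
    H.continuous.integrable_of_hasCompactSupport ((isClosed_tsupport _).isCompact)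
  have hpair : (∫ x, g x ∂μ) = (∫ x, g1 x ∂μ, ∫ x, H x ∂μ) := integral_pair hint1 hintH
  have hg1v : (∫ x, g1 x ∂μ) = f := by
    funext d
    have hproj := (ContinuousLinearMap.proj (R := ℝ) (φ := fun _ : Fin (D + 1) => ℝ) d
      ).integral_comp_comm hint1
    have hval : ∫ x, g1 x d ∂μ = f d := by
      have := (hμ.2 d).2
      simpa [hg1def] using this
    rw [← hval]
    exact (hproj).symm
  have hmemA : (∫ x, H x ∂μ) ∈ A := by
    have : (f, ∫ x, H x ∂μ) ∈ C := by
      rw [← hg1v] at *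
      rw [← hpair]
      exact hmem
    exact this
  rw [hPH]
  exact le_csSup hAcomp.bddAbove hmemA
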